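/- Let N be a positive integer and let A₁, A₂ be N×N complex matrices. Suppose there exist invertible N×N complex matrices Ω₁, Ω₂ and diagonal matrices 𝔞₁, 𝔞₂ with real, pairwise distinct diagonal entries such that Ω₁ A₁ Ω₁⁻¹ = 𝔞₁ and Ω₂ A₂ Ω₂⁻¹ = 𝔞₂. Then there exists a positive-definite Hermitian N×N matrix Θ with A₁ᴴ Θ = Θ A₁ and A₂ᴴ Θ = Θ A₂ if and only if there exist functions d₁, d₂ : Fin N → ℝ with d₁(n) > 0 and d₂(n) > 0 for all n such that Ω₁ᴴ · diag(d₁) · Ω₁ = Ω₂ᴴ · diag(d₂) · Ω₂. -/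

import Mathlib

open scoped ComplexOrder
open Matrix

private lemma posDef_conj {N : ℕ} {Θ B : Matrix (Fin N) (Fin N) ℂ}
    (hΘ : Θ.PosDef) (hB : IsUnit B) : (Bᴴ * Θ * B).PosDef := by
  refine posDef_iff_dotProduct_mulVec.2 ⟨isHermitian_conjTranspose_mul_mul B hΘ.1, fun x hx => ?_⟩
  have hx' : B *ᵥ x ≠ 0 := fun h =>
    hx (by simpa using (mulVec_injective_iff_isUnit.2 hB) (h.trans (mulVec_zero B).symm))
  have := hΘ.dotProduct_mulVec_pos hx'
  calc (0:ℂ) < star (B *ᵥ x) ⬝ᵥ Θ *ᵥ (B *ᵥ x) := this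
    _ = star x ⬝ᵥ (Bᴴ * Θ * B) *ᵥ x := by
        rw [star_mulVec, mulVec_mulVec, dotProduct_mulVec, vecMul_vecMul,
          dotProduct_mulVec, Matrix.mul_assoc]

private lemma key_metric {N : ℕ} (A Ω : Matrix (Fin N) (Fin N) ℂ)
    (hΩ : IsUnit Ω) (a : Fin N → ℝ) (ha : Function.Injective a)
    (h : Ω * A * Ω⁻¹ = Matrix.diagonal fun n => (a n : ℂ))
    (Θ : Matrix (Fin N) (Fin N) ℂ) (hΘ : Θ.PosDef) (hq : Aᴴ * Θ = Θ * A) :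
    ∃ d : Fin N → ℝ, (∀ n, 0 < d n) ∧
      Θ = Ωᴴ * Matrix.diagonal (fun n => (d n : ℂ)) * Ω := by
  have hdet : IsUnit Ω.det := (Matrix.isUnit_iff_isUnit_det Ω).1 hΩ
  have hinv : Ω * Ω⁻¹ = 1 := Matrix.mul_nonsing_inv Ω hdet
  have hinv' : Ω⁻¹ * Ω = 1 := Matrix.nonsing_inv_mul Ω hdet
  set D : Matrix (Fin N) (Fin N) ℂ := Matrix.diagonal fun n => (a n : ℂ) with hD
  have hDH : Dᴴ = D :=
    Matrix.isHermitian_diagonal_of_self_adjoint _ (funext fun i => Complex.conj_ofReal (a i))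
  have hA : A = Ω⁻¹ * D * Ω := by
    rw [← h]
    simp only [Matrix.mul_assoc]
    rw [hinv', Matrix.mul_one, ← Matrix.mul_assoc, hinv', Matrix.one_mul]
  set S : Matrix (Fin N) (Fin N) ℂ := (Ω⁻¹)ᴴ * Θ * Ω⁻¹ with hS
  have hSpos : S.PosDef := posDef_conj hΘ ((Matrix.isUnit_nonsing_inv_iff).2 hΩ)
  have hAH : Aᴴ = Ωᴴ * D * (Ω⁻¹)ᴴ := by
    rw [hA]
    simp [conjTranspose_mul, hDH, Matrix.mul_assoc]
  have hcomm : D * S = S * D := by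
    have h2 : Ωᴴ * D * (Ω⁻¹)ᴴ * Θ = Θ * (Ω⁻¹ * D * Ω) := by rw [← hAH, ← hA, hq]
    have h3 := congrArg (fun M => (Ω⁻¹)ᴴ * M * Ω⁻¹) h2
    have hOH : (Ω⁻¹)ᴴ * Ωᴴ = 1 := by rw [← conjTranspose_mul, hinv, conjTranspose_one]
    have hOH' : Ω * Ω⁻¹ = 1 := hinv
    simp only [Matrix.mul_assoc] at h3 ⊢
    rw [← Matrix.mul_assoc ((Ω⁻¹)ᴴ) (Ωᴴ), hOH, Matrix.one_mul] at h3
    rw [hS]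
    simp only [Matrix.mul_assoc]
    rw [hinv, Matrix.mul_one] at h3
    exact h3
  have hSdiag : S = Matrix.diagonal fun i => S i i := by
    ext i j
    rcases eq_or_ne i j with rfl | hij
    · exact (diagonal_apply_eq _ i).symm
    · have := congrFun (congrFun hcomm i) j
      simp only [hD, Matrix.diagonal_mul, Matrix.mul_diagonal] at this
      -- this : (a i : ℂ) * S i j = S i j * a j
      have haij : (a i : ℂ) ≠ (a j : ℂ) := by
        exact_mod_cast fun hc => hij (ha (by exact_mod_cast hc))
      have hz : S i j * ((a i : ℂ) - a j) = 0 := by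
        rw [mul_sub]
        rw [mul_comm ((a i : ℂ)) (S i j)] at this
        rw [this]
        ring
      rcases mul_eq_zero.1 hz with h' | h'
      · simpa [diagonal_apply_ne _ hij] using h'
      · exact absurd (sub_eq_zero.1 h') haij
  have hpos : ∀ i, (0:ℂ) < S i i := by
    intro i
    have : (Matrix.diagonal fun i => S i i).PosDef := by rw [← hSdiag]; exact hSpos
    exact (posDef_diagonal_iff.1 this) i
  refine ⟨fun i => (S i i).re, fun i => ?_, ?_⟩
  · have := hpos i
    rw [Complex.lt_def] at this
    simpa using this.1
  · have hre : (fun n => ((S n n).re : ℂ)) = fun n => S n n := by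
      funext n
      have := hpos n
      rw [Complex.lt_def] at this
      exact Complex.ext rfl (by simpa using this.2)
    rw [hre, ← hSdiag, hS]
    rw [← Matrix.mul_assoc, ← Matrix.mul_assoc, ← conjTranspose_mul, hinv',
      conjTranspose_one, Matrix.one_mul, Matrix.mul_assoc, hinv', Matrix.mul_one]

private lemma quasi_of_metric {N : ℕ} (A Ω : Matrix (Fin N) (Fin N) ℂ)
    (hΩ : IsUnit Ω) (a : Fin N → ℝ)
    (h : Ω * A * Ω⁻¹ = Matrix.diagonal fun n => (a n : ℂ))
    (d : Fin N → ℝ) :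
    Aᴴ * (Ωᴴ * Matrix.diagonal (fun n => (d n : ℂ)) * Ω) =
      (Ωᴴ * Matrix.diagonal (fun n => (d n : ℂ)) * Ω) * A := by
  have hdet : IsUnit Ω.det := (Matrix.isUnit_iff_isUnit_det Ω).1 hΩ
  have hinv : Ω * Ω⁻¹ = 1 := Matrix.mul_nonsing_inv Ω hdet
  have hinv' : Ω⁻¹ * Ω = 1 := Matrix.nonsing_inv_mul Ω hdet
  set D : Matrix (Fin N) (Fin N) ℂ := Matrix.diagonal fun n => (a n : ℂ) with hD
  set Dd : Matrix (Fin N) (Fin N) ℂ := Matrix.diagonal fun n => (d n : ℂ) with hDd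
  have hDH : Dᴴ = D :=
    Matrix.isHermitian_diagonal_of_self_adjoint _ (funext fun i => Complex.conj_ofReal (a i))
  have hA : A = Ω⁻¹ * D * Ω := by
    rw [← h]
    simp only [Matrix.mul_assoc]
    rw [hinv', Matrix.mul_one, ← Matrix.mul_assoc, hinv', Matrix.one_mul]
  have hAH : Aᴴ = Ωᴴ * D * (Ω⁻¹)ᴴ := by
    rw [hA]; simp [conjTranspose_mul, hDH, Matrix.mul_assoc]
  have hOH : (Ω⁻¹)ᴴ * Ωᴴ = 1 := by rw [← conjTranspose_mul, hinv, conjTranspose_one]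
  have hDcomm : D * Dd = Dd * D := by
    rw [hD, hDd, diagonal_mul_diagonal, diagonal_mul_diagonal]
    exact congrArg _ (funext fun i => mul_comm _ _)
  calc Aᴴ * (Ωᴴ * Dd * Ω) = Ωᴴ * (D * ((Ω⁻¹)ᴴ * Ωᴴ) * Dd) * Ω := by
        rw [hAH]; simp only [Matrix.mul_assoc]
    _ = Ωᴴ * (Dd * D) * Ω := by rw [hOH, Matrix.mul_one, hDcomm]
    _ = Ωᴴ * (Dd * ((Ω * Ω⁻¹) * D)) * Ω := by rw [hinv, Matrix.one_mul]
    _ = (Ωᴴ * Dd * Ω) * A := by rw [hA]; simp only [Matrix.mul_assoc]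

/-- Lemma 1 of the paper: two candidates `A₁`, `A₂`, each diagonalizable with
real non-degenerate spectrum, admit a shared positive-definite Hermitian
metric iff the two families of metrics intersect. -/
theorem compatibility_iff_shared_rescaled_metric (N : ℕ) (hN : 0 < N)
    (A₁ A₂ Ω₁ Ω₂ : Matrix (Fin N) (Fin N) ℂ)
    (hΩ₁ : IsUnit Ω₁) (hΩ₂ : IsUnit Ω₂) (a₁ a₂ : Fin N → ℝ)
    (ha₁ : Function.Injective a₁) (ha₂ : Function.Injective a₂)
    (h₁ : Ω₁ * A₁ * Ω₁⁻¹ = Matrix.diagonal fun n => (a₁ n : ℂ))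
    (h₂ : Ω₂ * A₂ * Ω₂⁻¹ = Matrix.diagonal fun n => (a₂ n : ℂ)) :
    (∃ Θ : Matrix (Fin N) (Fin N) ℂ, Θ.IsHermitian ∧ Θ.PosDef ∧
      A₁ᴴ * Θ = Θ * A₁ ∧ A₂ᴴ * Θ = Θ * A₂) ↔
    (∃ d₁ d₂ : Fin N → ℝ, (∀ n, 0 < d₁ n) ∧ (∀ n, 0 < d₂ n) ∧
      Ω₁ᴴ * Matrix.diagonal (fun n => (d₁ n : ℂ)) * Ω₁ =
        Ω₂ᴴ * Matrix.diagonal (fun n => (d₂ n : ℂ)) * Ω₂) := by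
  constructor
  · rintro ⟨Θ, _, hpd, hq₁, hq₂⟩
    obtain ⟨d₁, hd₁, hΘ₁⟩ := key_metric A₁ Ω₁ hΩ₁ a₁ ha₁ h₁ Θ hpd hq₁
    obtain ⟨d₂, hd₂, hΘ₂⟩ := key_metric A₂ Ω₂ hΩ₂ a₂ ha₂ h₂ Θ hpd hq₂
    exact ⟨d₁, d₂, hd₁, hd₂, by rw [← hΘ₁, ← hΘ₂]⟩
  · rintro ⟨d₁, d₂, hd₁, hd₂, heq⟩
    refine ⟨Ω₁ᴴ * Matrix.diagonal (fun n => (d₁ n : ℂ)) * Ω₁, ?_, ?_, ?_, ?_⟩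
    · exact isHermitian_conjTranspose_mul_mul Ω₁
        (Matrix.PosDef.diagonal (fun i => Complex.zero_lt_real.2 (hd₁ i))).1
    · exact posDef_conj (Matrix.PosDef.diagonal
        (fun i => Complex.zero_lt_real.2 (hd₁ i))) hΩ₁
    · exact quasi_of_metric A₁ Ω₁ hΩ₁ a₁ h₁ d₁
    · rw [heq]; exact quasi_of_metric A₂ Ω₂ hΩ₂ a₂ h₂ d₂
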